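/- arXiv:2205.14220 — 3 statements merged into one kernel-verified Lean document; each statement's English description precedes it below -/
import Mathlib

section
/- The multiplicative MTL penalty minimization over the factorization is equivalent to the joint square-root penalty: for coefficients Θ ∈ ℝ^{p×K}, inf over (τ ∈ ℝ₊^p, γ ∈ ℝ^{p×K}) with Θⱼ⁽ᵏ⁾ = τⱼ γⱼ⁽ᵏ⁾ for all j,k of η₁ Σⱼ τⱼ + η₂ Σⱼ Σₖ |γⱼ⁽ᵏ⁾| equals 2√(η₁η₂) Σⱼ (Σₖ |Θⱼ⁽ᵏ⁾|)^{1/2}. -/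
lemma amgm_aux {a b : ℝ} (ha : 0 ≤ a) (hb : 0 ≤ b) : 2 * Real.sqrt (a * b) ≤ a + b := by
  rw [Real.sqrt_mul ha]
  nlinarith [sq_nonneg (Real.sqrt a - Real.sqrt b), Real.sq_sqrt ha, Real.sq_sqrt hb,
    Real.sqrt_nonneg a, Real.sqrt_nonneg b]

/-- For coefficients `Θ ∈ ℝ^{p×K}`, the infimum over factorizations
`Θⱼ⁽ᵏ⁾ = τⱼ γⱼ⁽ᵏ⁾` with `τⱼ ≥ 0` of the multiplicative MTL penalty
`η₁ Σⱼ τⱼ + η₂ Σⱼ Σₖ |γⱼ⁽ᵏ⁾|` equals the joint square-root penalty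
`2 √(η₁ η₂) Σⱼ (Σₖ |Θⱼ⁽ᵏ⁾|)^{1/2}`. -/
theorem mtl_penalty_equiv (p K : ℕ) (η₁ η₂ : ℝ) (hη₁ : 0 < η₁) (hη₂ : 0 < η₂)
    (Θ : Fin p → Fin K → ℝ) :
    sInf {x : ℝ | ∃ (τ : Fin p → ℝ) (γ : Fin p → Fin K → ℝ),
        (∀ j, 0 ≤ τ j) ∧ (∀ j k, Θ j k = τ j * γ j k) ∧
        x = η₁ * ∑ j, τ j + η₂ * ∑ j, ∑ k, |γ j k|}
      = 2 * Real.sqrt (η₁ * η₂) * ∑ j, Real.sqrt (∑ k, |Θ j k|) := by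
  set S : Fin p → ℝ := fun j => ∑ k, |Θ j k| with hS
  have hSnn : ∀ j, 0 ≤ S j := fun j => Finset.sum_nonneg fun k _ => abs_nonneg _
  set T : ℝ := 2 * Real.sqrt (η₁ * η₂) * ∑ j, Real.sqrt (S j) with hT
  -- the witness
  set τ0 : Fin p → ℝ := fun j => Real.sqrt (η₂ * S j / η₁) with hτ0
  have hτ0nn : ∀ j, 0 ≤ τ0 j := fun j => Real.sqrt_nonneg _
  set γ0 : Fin p → Fin K → ℝ := fun j k => if τ0 j = 0 then 0 else Θ j k / τ0 j with hγ0
  have hS0 : ∀ j, τ0 j = 0 → S j = 0 := by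
    intro j h
    have h2 : η₂ * S j / η₁ ≤ 0 := Real.sqrt_eq_zero'.mp h
    have h3 : 0 ≤ η₂ * S j / η₁ := by positivity
    have : η₂ * S j / η₁ = 0 := le_antisymm h2 h3
    have := (div_eq_zero_iff.mp this).resolve_right (ne_of_gt hη₁)
    rcases mul_eq_zero.mp this with h4 | h4
    · exact absurd h4 (ne_of_gt hη₂)
    · exact h4
  have hΘ0 : ∀ j, S j = 0 → ∀ k, Θ j k = 0 := by
    intro j hs k
    have h1 : |Θ j k| ≤ S j :=
      Finset.single_le_sum (fun k _ => abs_nonneg (Θ j k)) (Finset.mem_univ k)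
    have : |Θ j k| = 0 := le_antisymm (hs ▸ h1) (abs_nonneg _)
    exact abs_eq_zero.mp this
  have hfac : ∀ j k, Θ j k = τ0 j * γ0 j k := by
    intro j k
    by_cases h : τ0 j = 0
    · simp only [hγ0, h, if_pos, mul_zero]
      exact hΘ0 j (hS0 j h) k
    · simp only [hγ0, if_neg h]
      field_simp
  -- row value of the witness
  have hrow : ∀ j, η₁ * τ0 j + η₂ * ∑ k, |γ0 j k|
      = 2 * Real.sqrt (η₁ * η₂) * Real.sqrt (S j) := by
    intro j
    by_cases h : τ0 j = 0
    · have hs := hS0 j h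
      have : ∀ k, γ0 j k = 0 := fun k => by simp [hγ0, h]
      simp [h, this, hs]
    · have hτpos : 0 < τ0 j := lt_of_le_of_ne (hτ0nn j) (Ne.symm h)
      have hsum : ∑ k, |γ0 j k| = S j / τ0 j := by
        rw [hS, Finset.sum_div]
        refine Finset.sum_congr rfl fun k _ => ?_
        simp only [hγ0, if_neg h]
        rw [abs_div, abs_of_pos hτpos]
      have hτsq : τ0 j ^ 2 = η₂ * S j / η₁ := by
        rw [hτ0]
        exact Real.sq_sqrt (by positivity)
      have hSpos : 0 < S j := by
        by_contra hc
        push_neg at hc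
        have hz : S j = 0 := le_antisymm hc (hSnn j)
        exact h (by simp [hτ0, hz])
      have key : η₁ * τ0 j = Real.sqrt (η₁ * η₂) * Real.sqrt (S j) := by
        rw [← Real.sqrt_mul (by positivity : (0:ℝ) ≤ η₁ * η₂)]
        rw [show η₁ * η₂ * S j = η₁ ^ 2 * (η₂ * S j / η₁) by field_simp]
        rw [Real.sqrt_mul (sq_nonneg η₁), Real.sqrt_sq hη₁.le, hτ0]
      have h1 : η₂ * S j = η₁ * τ0 j ^ 2 := by
        rw [hτsq]; field_simp
      have key2 : η₂ * (S j / τ0 j) = η₁ * τ0 j := by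
        field_simp
        nlinarith [h1]
      rw [hsum, key2, key]; ring
  have hsplit : ∀ (τ : Fin p → ℝ) (γ : Fin p → Fin K → ℝ),
      η₁ * ∑ j, τ j + η₂ * ∑ j, ∑ k, |γ j k|
        = ∑ j, (η₁ * τ j + η₂ * ∑ k, |γ j k|) := by
    intro τ γ
    rw [Finset.mul_sum, Finset.mul_sum, Finset.sum_add_distrib]
  have hTsum : T = ∑ j, 2 * Real.sqrt (η₁ * η₂) * Real.sqrt (S j) := by
    rw [hT, Finset.mul_sum]
  have hwitval : η₁ * ∑ j, τ0 j + η₂ * ∑ j, ∑ k, |γ0 j k| = T := by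
    rw [hsplit, hTsum]
    exact Finset.sum_congr rfl fun j _ => hrow j
  have hmem : T ∈ {x : ℝ | ∃ (τ : Fin p → ℝ) (γ : Fin p → Fin K → ℝ),
        (∀ j, 0 ≤ τ j) ∧ (∀ j k, Θ j k = τ j * γ j k) ∧
        x = η₁ * ∑ j, τ j + η₂ * ∑ j, ∑ k, |γ j k|} :=
    ⟨τ0, γ0, hτ0nn, hfac, hwitval.symm⟩
  have hlb : ∀ x ∈ {x : ℝ | ∃ (τ : Fin p → ℝ) (γ : Fin p → Fin K → ℝ),
        (∀ j, 0 ≤ τ j) ∧ (∀ j k, Θ j k = τ j * γ j k) ∧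
        x = η₁ * ∑ j, τ j + η₂ * ∑ j, ∑ k, |γ j k|}, T ≤ x := by
    rintro x ⟨τ, γ, hτnn, hfc, rfl⟩
    rw [hsplit, hTsum]
    refine Finset.sum_le_sum fun j _ => ?_
    have hγnn : 0 ≤ ∑ k, |γ j k| := Finset.sum_nonneg fun k _ => abs_nonneg _
    have hprod : η₁ * τ j * (η₂ * ∑ k, |γ j k|) = η₁ * η₂ * S j := by
      have : τ j * ∑ k, |γ j k| = S j := by
        rw [hS, Finset.mul_sum]
        refine Finset.sum_congr rfl fun k _ => ?_
        rw [hfc j k, abs_mul, abs_of_nonneg (hτnn j)]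
      rw [← this]; ring
    calc 2 * Real.sqrt (η₁ * η₂) * Real.sqrt (S j)
        = 2 * Real.sqrt (η₁ * η₂ * S j) := by
          rw [Real.sqrt_mul (by positivity : (0:ℝ) ≤ η₁ * η₂)]; ring
      _ = 2 * Real.sqrt (η₁ * τ j * (η₂ * ∑ k, |γ j k|)) := by rw [hprod]
      _ ≤ η₁ * τ j + η₂ * ∑ k, |γ j k| :=
          amgm_aux (mul_nonneg hη₁.le (hτnn j)) (mul_nonneg hη₂.le hγnn)
  exact IsLeast.csInf_eq ⟨hmem, hlb⟩
end

section
/- Refined conditioning event equivalence (Lemma 1): the event {Ê = E, Ŝ = S, Γ̂ = Γ, Û = U} is equivalent to the event {V > 0, Γ̂ = Γ, Γ − D V > 0, Û = U}, where V collects, for each active predictor j, the absolute values of its nonzero coefficients across all but the last task in which it is active, Γⱼ = Σₖ |Θ̂ⱼ⁽ᵏ⁾|, and D is the 0-1 matrix with D_i = (0,…,1_{(d_{j_i}−1)},…,0) recording which entries of V belong to predictor j_i. -/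
/-- Lemma 1: For each active predictor `i` (active in `d i ≥ 1` tasks), the
absolute active coefficients of predictor `i` are the entries `v i l`, `l < d i - 1`,
together with the last one `Γ i - Σₗ v i l` (since `Γ i` is the sum of all of them).
The event that all absolute active coefficients are positive (equivalently, the estimated
supports and signs are as observed, given `Γ̂ = Γ` and `Û = U`) is equivalent to the event
`V > 0` and `Γ - D V > 0` componentwise. -/
theorem refined_conditioning_event_equiv (r : ℕ) (d : Fin r → ℕ) (hd : ∀ i, 1 ≤ d i)
    (v : (i : Fin r) → Fin (d i - 1) → ℝ) (Γ : Fin r → ℝ) :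
    (∀ i : Fin r, ∀ j : Fin (d i),
        0 < if h : (j : ℕ) < d i - 1 then v i ⟨j, h⟩ else Γ i - ∑ l, v i l)
      ↔ ((∀ i, ∀ l, 0 < v i l) ∧ (∀ i, 0 < Γ i - ∑ l, v i l)) := by
  constructor
  · intro h
    refine ⟨fun i l => ?_, fun i => ?_⟩
    · have hl : (l : ℕ) < d i := lt_of_lt_of_le l.isLt (Nat.sub_le _ _)
      have := h i ⟨l, hl⟩
      rw [dif_pos l.isLt] at this
      simpa using this
    · have hlt : d i - 1 < d i := Nat.sub_lt (hd i) one_pos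
      have := h i ⟨d i - 1, hlt⟩
      rwa [dif_neg (by simp)] at this
  · rintro ⟨h1, h2⟩ i j
    split
    · exact h1 _ _
    · exact h2 i
end

section
/- Observed Fisher information formula (Theorem 2, variance part): with the notation above, the inverse observed information matrix equals Î^{-1} = L^{-1}ΣL'^{-1} + L^{-1}Σ(P'Δ^{-1}P − P'Δ^{-1}(Δ^{-1} + ∇²φ_{H,g}(V̂))^{-1}Δ^{-1}P)ΣL'^{-1}, obtained by evaluating L'Σ^{-1}∇²F*(ζ)Σ^{-1}L at ζ = Σ^{-1}(Lβ^MLE + m) and inverting, where ∇²F*(ζ) = (Σ^{-1} + P'Δ^{-1}P − P'Δ^{-1}(Δ^{-1}+∇²φ_{H,g}(V(β*(ζ))))^{-1}Δ^{-1}P)^{-1}. -/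
open Matrix

/-- Theorem 2, variance part: with
`∇²F*(ζ) = (Σ⁻¹ + P'Δ⁻¹P - P'Δ⁻¹(Δ⁻¹ + M)⁻¹Δ⁻¹P)⁻¹` evaluated at
`ζ = Σ⁻¹(Lβ^MLE + m)` (so that `M = ∇²φ_{H,g}(V̂)` is positive semidefinite), the observed
information `Î = L'Σ⁻¹ ∇²F*(ζ) Σ⁻¹ L` satisfies
`Î⁻¹ = L⁻¹ΣL'⁻¹ + L⁻¹Σ(P'Δ⁻¹P - P'Δ⁻¹(Δ⁻¹ + M)⁻¹Δ⁻¹P)ΣL'⁻¹`. -/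
theorem observed_fisher_information_formula (d m : ℕ)
    (L Sg : Matrix (Fin d) (Fin d) ℝ) (hL : IsUnit L.det) (hSg : Sg.PosDef)
    (Δ : Matrix (Fin m) (Fin m) ℝ) (hΔ : Δ.PosDef)
    (M : Matrix (Fin m) (Fin m) ℝ) (hM : M.PosSemidef)
    (P : Matrix (Fin m) (Fin d) ℝ) :
    (Lᵀ * Sg⁻¹
        * (Sg⁻¹ + Pᵀ * Δ⁻¹ * P - Pᵀ * Δ⁻¹ * (Δ⁻¹ + M)⁻¹ * Δ⁻¹ * P)⁻¹
        * Sg⁻¹ * L)⁻¹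
      = L⁻¹ * Sg * (Lᵀ)⁻¹
        + L⁻¹ * Sg * (Pᵀ * Δ⁻¹ * P - Pᵀ * Δ⁻¹ * (Δ⁻¹ + M)⁻¹ * Δ⁻¹ * P)
          * Sg * (Lᵀ)⁻¹ := by
  set N : Matrix (Fin m) (Fin m) ℝ := Δ⁻¹ + M with hNdef
  set B : Matrix (Fin d) (Fin d) ℝ :=
    Pᵀ * Δ⁻¹ * P - Pᵀ * Δ⁻¹ * N⁻¹ * Δ⁻¹ * P with hBdef
  have hN : N.PosDef := hΔ.inv.add_posSemidef hM
  have hΔd : IsUnit Δ.det := hΔ.det_pos.ne'.isUnit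
  have hNd : IsUnit N.det := hN.det_pos.ne'.isUnit
  have hSgd : IsUnit Sg.det := hSg.det_pos.ne'.isUnit
  -- key algebraic identity: Δ⁻¹ - Δ⁻¹N⁻¹Δ⁻¹ = (N⁻¹Δ⁻¹)ᵀ (M + MΔM) (N⁻¹Δ⁻¹)
  have hNsymm : Nᵀ = N := hN.isHermitian
  have hΔsymm : Δᵀ = Δ := hΔ.isHermitian
  have hX : (N⁻¹ * Δ⁻¹)ᵀ = Δ⁻¹ * N⁻¹ := by
    rw [Matrix.transpose_mul, Matrix.transpose_nonsing_inv, Matrix.transpose_nonsing_inv,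
      hNsymm, hΔsymm]
  have hkey : Δ⁻¹ - Δ⁻¹ * N⁻¹ * Δ⁻¹
      = (N⁻¹ * Δ⁻¹)ᵀ * (M + M * Δ * M) * (N⁻¹ * Δ⁻¹) := by
    rw [hX]
    have h1 : M + M * Δ * M = N * Δ * M := by
      rw [hNdef, Matrix.add_mul, Matrix.add_mul, Matrix.nonsing_inv_mul _ hΔd, Matrix.one_mul]
    have h2 : M = N - Δ⁻¹ := by rw [hNdef]; abel
    rw [h1]
    symm
    calc Δ⁻¹ * N⁻¹ * (N * Δ * M) * (N⁻¹ * Δ⁻¹)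
        = Δ⁻¹ * (N⁻¹ * N) * Δ * M * N⁻¹ * Δ⁻¹ := by
          simp only [Matrix.mul_assoc]
      _ = M * N⁻¹ * Δ⁻¹ := by
          rw [Matrix.nonsing_inv_mul _ hNd, Matrix.mul_one,
            show Δ⁻¹ * Δ = 1 from Matrix.nonsing_inv_mul _ hΔd]
          simp [Matrix.mul_assoc]
      _ = (N - Δ⁻¹) * N⁻¹ * Δ⁻¹ := by rw [← h2]
      _ = Δ⁻¹ - Δ⁻¹ * N⁻¹ * Δ⁻¹ := by
          rw [Matrix.sub_mul, Matrix.sub_mul, Matrix.mul_nonsing_inv _ hNd, Matrix.one_mul]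
  have hMM : (M + M * Δ * M).PosSemidef := by
    have : (M * Δ * M).PosSemidef := by
      have hMsymm : Mᵀ = M := by
        simpa [Matrix.conjTranspose_eq_transpose_of_trivial] using hM.isHermitian.eq
      have := hΔ.posSemidef.conjTranspose_mul_mul_same M
      simpa [Matrix.conjTranspose_eq_transpose_of_trivial, hMsymm] using this
    exact hM.add this
  have hBfact : B = (N⁻¹ * Δ⁻¹ * P)ᵀ * (M + M * Δ * M) * (N⁻¹ * Δ⁻¹ * P) := by
    have : B = Pᵀ * (Δ⁻¹ - Δ⁻¹ * N⁻¹ * Δ⁻¹) * P := by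
      rw [hBdef]
      simp only [Matrix.mul_sub, Matrix.sub_mul, Matrix.mul_assoc]
    rw [this, hkey]
    simp only [Matrix.transpose_mul, Matrix.mul_assoc]
  have hBpsd : B.PosSemidef := by
    rw [hBfact]
    have := hMM.conjTranspose_mul_mul_same (N⁻¹ * Δ⁻¹ * P)
    simpa [Matrix.conjTranspose_eq_transpose_of_trivial] using this
  have hA : (Sg⁻¹ + B).PosDef := hSg.inv.add_posSemidef hBpsd
  have hAd : IsUnit (Sg⁻¹ + B).det := hA.det_pos.ne'.isUnit
  have hgoalA : Sg⁻¹ + Pᵀ * Δ⁻¹ * P - Pᵀ * Δ⁻¹ * N⁻¹ * Δ⁻¹ * P = Sg⁻¹ + B := by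
    rw [hBdef]; abel
  rw [hgoalA]
  rw [Matrix.mul_inv_rev, Matrix.mul_inv_rev, Matrix.mul_inv_rev, Matrix.mul_inv_rev,
    Matrix.nonsing_inv_nonsing_inv _ hSgd, Matrix.nonsing_inv_nonsing_inv _ hAd]
  have e1 : ∀ X : Matrix (Fin d) (Fin d) ℝ, Sg * (Sg⁻¹ * X) = X := fun X => by
    rw [← Matrix.mul_assoc, Matrix.mul_nonsing_inv _ hSgd, Matrix.one_mul]
  simp only [Matrix.mul_add, Matrix.add_mul, Matrix.mul_assoc, e1]
end
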